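/- For m ≥ 2, ω = e^{2πi/m}, and 1 ≤ j ≤ m−1, the polynomial d^B_n(q) = ∑_{k=0}^n (−1)^k q^{k(k−1)} [2n]_q [2n−2]_q ⋯ [2k+2]_q evaluated at q = ω^j is bounded in absolute value by a constant depending only on m (independent of n). -/

import Mathlib

open Complex Finset

/-- The Adin–Roichman formula for the flag major index generating function over
type `B` derangements, evaluated at `q : ℂ`:
`∑_{k=0}^n (−1)^k q^{k(k−1)} [2n]_q [2n−2]_q ⋯ [2k+2]_q`. -/
noncomputable def dBGF (n : ℕ) (q : ℂ) : ℂ :=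
  ∑ k ∈ Finset.range (n + 1), (-1) ^ k * q ^ (k * (k - 1)) *
    ∏ t ∈ Finset.Icc (k + 1) n, (∑ i ∈ Finset.range (2 * t), q ^ i)

lemma dBGF_bound (m : ℕ) (hm : 1 ≤ m) (q : ℂ) (hq1 : q ≠ 1) (hqm : q ^ m = 1) (n : ℕ) :
    ‖dBGF n q‖ ≤ m * (max 1 (2 / ‖q - 1‖)) ^ m := by
  set B : ℝ := max 1 (2 / ‖q - 1‖) with hB
  have hB1 : (1 : ℝ) ≤ B := le_max_left _ _
  have hB0 : (0 : ℝ) ≤ B := le_trans zero_le_one hB1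
  have habsq : ‖q‖ = 1 := by
    have h1 : ‖q‖ ^ m = 1 := by rw [← norm_pow, hqm, norm_one]
    have h0 : (0 : ℝ) ≤ ‖q‖ := norm_nonneg q
    rcases (pow_eq_one_iff_cases).mp h1 with h | h | h
    · omega
    · exact h
    · linarith [h.1]
  have hq1' : ‖q - 1‖ > 0 := by
    simpa [sub_eq_zero] using hq1
  have hfac : ∀ N : ℕ, ‖∑ i ∈ Finset.range N, q ^ i‖ ≤ B := by
    intro N
    rw [geom_sum_eq hq1, norm_div]
    refine le_trans ?_ (le_max_right _ _)
    have hnum : ‖q ^ N - 1‖ ≤ 2 := by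
      calc ‖q ^ N - 1‖ ≤ ‖q ^ N‖ + ‖(1:ℂ)‖ := by
            simpa using norm_sub_le (q ^ N) 1
        _ = 2 := by rw [norm_pow, habsq, one_pow, norm_one]; norm_num
    exact div_le_div_of_nonneg_right hnum hq1'.le |>.trans_eq rfl
  have hzero : ∀ k, k + m ≤ n →
      (∏ t ∈ Finset.Icc (k + 1) n, ∑ i ∈ Finset.range (2 * t), q ^ i) = 0 := by
    intro k hk
    have hmpos : 0 < m := hm
    refine Finset.prod_eq_zero (i := m * (k / m + 1)) ?_ ?_
    · have h1 : k < m * (k / m + 1) := Nat.lt_mul_div_succ k hmpos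
      have h2 : k / m * m ≤ k := Nat.div_mul_le_self k m
      rw [Finset.mem_Icc]
      constructor
      · exact h1
      · calc m * (k / m + 1) = k / m * m + m := by ring
          _ ≤ k + m := by omega
          _ ≤ n := hk
    · rw [geom_sum_eq hq1]
      have : q ^ (2 * (m * (k / m + 1))) = 1 := by
        rw [show 2 * (m * (k / m + 1)) = m * (2 * (k / m + 1)) by ring, pow_mul, hqm, one_pow]
      simp [this]
  calc ‖dBGF n q‖
      ≤ ∑ k ∈ Finset.range (n + 1), ‖(-1) ^ k * q ^ (k * (k - 1)) *
          ∏ t ∈ Finset.Icc (k + 1) n, (∑ i ∈ Finset.range (2 * t), q ^ i)‖ :=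
        norm_sum_le _ _
    _ ≤ ∑ k ∈ Finset.range (n + 1), (if n < k + m then B ^ m else 0) := by
        refine Finset.sum_le_sum fun k _ => ?_
        by_cases h : n < k + m
        · rw [if_pos h, norm_mul, norm_mul, norm_pow, norm_pow, habsq,
            norm_neg, norm_one]
          simp only [one_pow, one_mul]
          calc ‖∏ t ∈ Finset.Icc (k + 1) n, ∑ i ∈ Finset.range (2 * t), q ^ i‖
              = ∏ t ∈ Finset.Icc (k + 1) n,
                  ‖∑ i ∈ Finset.range (2 * t), q ^ i‖ := norm_prod _ _
            _ ≤ ∏ _t ∈ Finset.Icc (k + 1) n, B :=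
                Finset.prod_le_prod (fun t _ => norm_nonneg _) (fun t _ => hfac _)
            _ = B ^ (Finset.Icc (k + 1) n).card := by rw [Finset.prod_const]
            _ ≤ B ^ m := by
                apply pow_le_pow_right₀ hB1
                rw [Nat.card_Icc]
                omega
        · rw [if_neg h, hzero k (by omega), mul_zero, norm_zero]
    _ = ∑ k ∈ (Finset.range (n + 1)).filter (fun k => n < k + m), B ^ m := by
        rw [Finset.sum_filter]
    _ ≤ m * B ^ m := by
        rw [Finset.sum_const, nsmul_eq_mul]
        have hcard : ((Finset.range (n + 1)).filter (fun k => n < k + m)).card ≤ m := by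
          calc ((Finset.range (n + 1)).filter (fun k => n < k + m)).card
              ≤ (Finset.Ico (n + 1 - m) (n + 1)).card := by
                apply Finset.card_le_card
                intro k hk
                simp only [Finset.mem_filter, Finset.mem_range] at hk
                simp only [Finset.mem_Ico]
                omega
            _ ≤ m := by rw [Nat.card_Ico]; omega
        have : (0 : ℝ) ≤ B ^ m := pow_nonneg hB0 m
        calc (((Finset.range (n + 1)).filter (fun k => n < k + m)).card : ℝ) * B ^ m
            ≤ (m : ℝ) * B ^ m := by
              apply mul_le_mul_of_nonneg_right _ this
              exact_mod_cast hcard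

theorem stmt_12 (m : ℕ) (hm : 2 ≤ m)
    (ω : ℂ) (hω : ω = Complex.exp (2 * Real.pi * Complex.I / m)) :
    ∃ C : ℝ, ∀ j, 1 ≤ j → j ≤ m - 1 → ∀ n : ℕ,
      ‖dBGF n (ω ^ j)‖ ≤ C := by
  have hprim : IsPrimitiveRoot ω m := by
    rw [hω]
    exact Complex.isPrimitiveRoot_exp m (by omega)
  refine ⟨∑ j ∈ Finset.Icc 1 (m - 1),
      (m : ℝ) * (max 1 (2 / ‖ω ^ j - 1‖)) ^ m, ?_⟩
  intro j hj1 hj2 n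
  have hjmem : j ∈ Finset.Icc 1 (m - 1) := Finset.mem_Icc.mpr ⟨hj1, hj2⟩
  have hqm : (ω ^ j) ^ m = 1 := by
    rw [← pow_mul, mul_comm, pow_mul, hprim.pow_eq_one, one_pow]
  have hq1 : ω ^ j ≠ 1 := hprim.pow_ne_one_of_pos_of_lt (by omega) (by omega)
  have hbd := dBGF_bound m (by omega) (ω ^ j) hq1 hqm n
  refine hbd.trans ?_
  refine Finset.single_le_sum (f := fun j => (m : ℝ) *
      (max 1 (2 / ‖ω ^ j - 1‖)) ^ m) ?_ hjmem
  intro i _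
  have h1 : (1 : ℝ) ≤ max 1 (2 / ‖ω ^ i - 1‖) := le_max_left _ _
  positivity
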